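/- Subsolution property is stable under convex combination with a strict classical subsolution: if u is a viscosity subsolution of λu + H(x, Du) = 0 on an open set Ω ⊂ R^n, φ ∈ C^1(Ω) satisfies λφ(x) + H(x, Dφ(x)) < 0 for all x ∈ Ω, H(x,·) is convex for each x, and μ ∈ (0,1), then u^μ := μ u + (1−μ) φ is a viscosity subsolution of λ u^μ + H(x, D u^μ) = 0 on Ω. -/

import Mathlib

/-- A function `u` is a viscosity subsolution of `λu + H(x, Du) = 0` on the
open set `Ω` if at any local maximum point `x₀ ∈ Ω` of `u − ψ`, with `ψ` a `C¹`
test function, one has `λ u(x₀) + H(x₀, Dψ(x₀)) ≤ 0`. -/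
def IsViscositySubsolution {n : ℕ} (Ω : Set (EuclideanSpace ℝ (Fin n)))
    (lam : ℝ) (H : EuclideanSpace ℝ (Fin n) → EuclideanSpace ℝ (Fin n) → ℝ)
    (u : EuclideanSpace ℝ (Fin n) → ℝ) : Prop :=
  ∀ ψ : EuclideanSpace ℝ (Fin n) → ℝ, ContDiff ℝ 1 ψ →
    ∀ x₀ ∈ Ω, IsLocalMaxOn (fun x => u x - ψ x) Ω x₀ →
      lam * u x₀ + H x₀ (gradient ψ x₀) ≤ 0

/-- Subsolutions are stable under convex combination with a strict classical
subsolution, when `H(x, ·)` is convex. -/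
theorem subsolution_convex_combination {n : ℕ}
    (Ω : Set (EuclideanSpace ℝ (Fin n))) (hΩ : IsOpen Ω)
    (lam : ℝ) (hlam : 0 < lam)
    (H : EuclideanSpace ℝ (Fin n) → EuclideanSpace ℝ (Fin n) → ℝ)
    (hH : Continuous fun p : EuclideanSpace ℝ (Fin n) × EuclideanSpace ℝ (Fin n) => H p.1 p.2)
    (hconv : ∀ x ∈ Ω, ConvexOn ℝ Set.univ (H x))
    (u : EuclideanSpace ℝ (Fin n) → ℝ)
    (hu_usc : UpperSemicontinuousOn u Ω)
    (hu : IsViscositySubsolution Ω lam H u)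
    (φ : EuclideanSpace ℝ (Fin n) → ℝ) (hφ : ContDiff ℝ 1 φ)
    (hφstrict : ∀ x ∈ Ω, lam * φ x + H x (gradient φ x) < 0)
    (μ : ℝ) (hμ : μ ∈ Set.Ioo (0 : ℝ) 1) :
    IsViscositySubsolution Ω lam H (fun x => μ * u x + (1 - μ) * φ x) := by
  obtain ⟨hμ0, hμ1⟩ := hμ
  intro ψ hψ x₀ hx₀ hmax
  set ψ' : EuclideanSpace ℝ (Fin n) → ℝ := fun x => μ⁻¹ * (ψ x - (1 - μ) * φ x) with hψ'def
  have hψ'C : ContDiff ℝ 1 ψ' := contDiff_const.mul (hψ.sub (contDiff_const.mul hφ))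
  -- local max for u - ψ'
  have hmax' : IsLocalMaxOn (fun x => u x - ψ' x) Ω x₀ := by
    unfold IsLocalMaxOn IsMaxFilter at hmax ⊢
    filter_upwards [hmax] with x h1
    have h1' : μ * u x + (1 - μ) * φ x - ψ x ≤ μ * u x₀ + (1 - μ) * φ x₀ - ψ x₀ := h1
    show u x - ψ' x ≤ u x₀ - ψ' x₀
    have e : ∀ y, u y - ψ' y = μ⁻¹ * (μ * u y + (1 - μ) * φ y - ψ y) := by
      intro y; simp only [hψ'def]; linear_combination (-(u y)) * (inv_mul_cancel₀ (ne_of_gt hμ0))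
    rw [e x, e x₀]
    exact mul_le_mul_of_nonneg_left h1' (by positivity)
  have h1 := hu ψ' hψ'C x₀ hx₀ hmax'
  have h2 := hφstrict x₀ hx₀
  -- gradient identity
  have hdψ : DifferentiableAt ℝ ψ x₀ := (hψ.differentiable one_ne_zero).differentiableAt
  have hdφ : DifferentiableAt ℝ φ x₀ := (hφ.differentiable one_ne_zero).differentiableAt
  have hgrad : gradient ψ x₀ = μ • gradient ψ' x₀ + (1 - μ) • gradient φ x₀ := by
    have hfd : fderiv ℝ ψ' x₀ = μ⁻¹ • (fderiv ℝ ψ x₀ - (1 - μ) • fderiv ℝ φ x₀) := by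
      have : ψ' = fun x => μ⁻¹ • (ψ x - (1 - μ) • φ x) := by
        funext x; simp [hψ'def, smul_eq_mul]
      rw [this, fderiv_fun_const_smul (by fun_prop : DifferentiableAt ℝ (fun y => ψ y - (1 - μ) • φ y) x₀),
        fderiv_fun_sub (g := fun y => (1 - μ) • φ y) hdψ (hdφ.const_smul (1 - μ)), fderiv_fun_const_smul hdφ]
    simp only [gradient, hfd, map_smul, map_sub]
    have hne : μ ≠ 0 := ne_of_gt hμ0
    match_scalars <;> field_simp <;> ring
  have hconvx := hconv x₀ hx₀
  have hcomb : H x₀ (gradient ψ x₀) ≤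
      μ * H x₀ (gradient ψ' x₀) + (1 - μ) * H x₀ (gradient φ x₀) := by
    rw [hgrad]
    exact hconvx.2 (Set.mem_univ _) (Set.mem_univ _) (le_of_lt hμ0) (by linarith) (by ring)
  have h3 := mul_le_mul_of_nonneg_left h1 (le_of_lt hμ0)
  have h4 := mul_le_mul_of_nonneg_left (le_of_lt h2) (by linarith : (0:ℝ) ≤ 1 - μ)
  show lam * (μ * u x₀ + (1 - μ) * φ x₀) + H x₀ (gradient ψ x₀) ≤ 0
  nlinarith [hcomb]
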